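/- For each T > 0 and compact control interval I ⊆ ℝ, the accessible set A(X₀, T) of the linear system Ẋ = AX + Bu with controls taking values in I is a compact subset of ℝⁿ. -/

import Mathlib

open MeasureTheory Matrix intervalIntegral
open scoped ENNReal

lemma compact_reach (n : ℕ) (f : ℝ → Fin n → ℝ) (hf : Continuous f) (a b : ℝ) (hab : a ≤ b)
    (T : ℝ) (hT : 0 < T) :
    IsCompact {x : Fin n → ℝ | ∃ u : ℝ → ℝ, Measurable u ∧ (∀ s, u s ∈ Set.Icc a b) ∧
      x = ∫ s in (0:ℝ)..T, u s • f s} := by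
  set μ : Measure ℝ := volume.restrict (Set.Ioc 0 T) with hμ
  haveI : IsFiniteMeasure μ := by
    constructor
    rw [hμ, Measure.restrict_apply_univ, Real.volume_Ioc]
    exact ENNReal.ofReal_lt_top
  -- bound for f on [0,T]
  obtain ⟨M, hM⟩ : ∃ M : ℝ, ∀ s ∈ Set.Icc (0:ℝ) T, ‖f s‖ ≤ M := by
    obtain ⟨M, hM⟩ := (isCompact_Icc.image (hf.norm)).bddAbove
    exact ⟨M, fun s hs => hM ⟨s, hs, rfl⟩⟩
  set C : ℝ := max |a| |b| with hC
  have hC0 : 0 ≤ C := le_trans (abs_nonneg a) (le_max_left _ _)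
  have huC : ∀ u : ℝ → ℝ, (∀ s, u s ∈ Set.Icc a b) → ∀ s, |u s| ≤ C := by
    intro u hu s
    rcases hu s with ⟨h1, h2⟩
    rw [abs_le]
    constructor
    · calc -C ≤ -|a| := neg_le_neg (le_max_left _ _)
        _ ≤ a := neg_abs_le a
        _ ≤ u s := h1
    · exact h2.trans ((le_abs_self b).trans (le_max_right _ _))
  have hae : ∀ᵐ x ∂μ, x ∈ Set.Ioc (0:ℝ) T :=
    ae_restrict_mem measurableSet_Ioc
  -- membership of coordinates of f in L²
  have hfi : ∀ i, MemLp (fun s => f s i) 2 μ := by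
    intro i
    refine MemLp.of_bound ((hf.measurable.eval).aestronglyMeasurable) M ?_
    filter_upwards [hae] with x hx
    calc ‖f x i‖ ≤ ‖f x‖ := norm_le_pi_norm _ i
      _ ≤ M := hM x ⟨hx.1.le, hx.2⟩
  set F : Fin n → Lp ℝ 2 μ := fun i => (hfi i).toLp _ with hF
  -- integrability of u • f and coordinate formula
  have key_int : ∀ u : ℝ → ℝ, Measurable u → (∀ s, u s ∈ Set.Icc a b) →
      Integrable (fun s => u s • f s) μ := by
    intro u hu hub
    refine Integrable.mono' (integrable_const (C * M)) ?_ ?_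
    · exact (hu.aestronglyMeasurable).smul hf.aestronglyMeasurable
    · filter_upwards [hae] with x hx
      rw [norm_smul]
      have h1 : ‖u x‖ ≤ C := by rw [Real.norm_eq_abs]; exact huC u hub x
      have h2 : ‖f x‖ ≤ M := hM x ⟨hx.1.le, hx.2⟩
      exact mul_le_mul h1 h2 (norm_nonneg _) hC0
  have key_coord : ∀ u : ℝ → ℝ, Measurable u → (∀ s, u s ∈ Set.Icc a b) → ∀ i,
      (∫ s in (0:ℝ)..T, u s • f s) i = ∫ x, u x * f x i ∂μ := by
    intro u hu hub i
    rw [intervalIntegral.integral_of_le hT.le]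
    have := (ContinuousLinearMap.integral_comp_comm
      (ContinuousLinearMap.proj (R := ℝ) (φ := fun _ : Fin n => ℝ) i)
      (key_int u hu hub)).symm
    simpa [smul_eq_mul] using this
  -- the representation of the dual pairing
  have hrep : ∀ U g : Lp ℝ 2 μ,
      (InnerProductSpace.toDual ℝ (Lp ℝ 2 μ) U) g = ∫ x, U x * g x ∂μ := by
    intro U g
    rw [InnerProductSpace.toDual_apply_apply, L2.inner_def]
    simp [RCLike.inner_apply, starRingEnd_apply]
    exact integral_congr_ae (ae_of_all _ fun x => mul_comm _ _)
  have hinner_int : ∀ U g : Lp ℝ 2 μ, Integrable (fun x => U x * g x) μ := by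
    intro U g
    have := L2.integrable_inner (𝕜 := ℝ) U g
    simpa [RCLike.inner_apply, starRingEnd_apply, mul_comm] using this
  set R : ℝ := (measureUnivNNReal μ : ℝ) ^ ((2:ℝ≥0∞)).toReal⁻¹ * C with hR
  set K : Set (WeakDual ℝ (Lp ℝ 2 μ)) :=
    {ℓ | ‖WeakDual.toStrongDual ℓ‖ ≤ R ∧ ∀ g : Lp ℝ 2 μ, (0 ≤ᵐ[μ] (g : ℝ → ℝ)) →
      a * ∫ x, g x ∂μ ≤ ℓ g ∧ ℓ g ≤ b * ∫ x, g x ∂μ} with hK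
  have hKclosed : IsClosed K := by
    have h1 : K = (WeakDual.toStrongDual ⁻¹' Metric.closedBall 0 R) ∩
        ⋂ (g : Lp ℝ 2 μ) (_ : 0 ≤ᵐ[μ] (g : ℝ → ℝ)),
          ((fun ℓ : WeakDual ℝ (Lp ℝ 2 μ) => ℓ g) ⁻¹'
            Set.Icc (a * ∫ x, g x ∂μ) (b * ∫ x, g x ∂μ)) := by
      ext ℓ
      simp only [hK, Set.mem_setOf_eq, Set.mem_inter_iff, Set.mem_preimage,
        Metric.mem_closedBall, dist_zero_right, Set.mem_iInter, Set.mem_Icc]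
    rw [h1]
    exact (WeakDual.isClosed_closedBall 0 R).inter
      (isClosed_iInter fun g => isClosed_iInter fun _ =>
        IsClosed.preimage (WeakDual.eval_continuous g) isClosed_Icc)
  have hKcompact : IsCompact K := by
    refine (WeakDual.isCompact_closedBall (𝕜 := ℝ) (E := Lp ℝ 2 μ) 0 R).of_isClosed_subset hKclosed ?_
    intro ℓ hℓ
    simpa [Metric.mem_closedBall, dist_zero_right] using hℓ.1
  set Φ : WeakDual ℝ (Lp ℝ 2 μ) → (Fin n → ℝ) := fun ℓ i => ℓ (F i) with hΦdef
  have hΦ : Continuous Φ := continuous_pi fun i => WeakDual.eval_continuous (F i)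
  have hset : {x : Fin n → ℝ | ∃ u : ℝ → ℝ, Measurable u ∧ (∀ s, u s ∈ Set.Icc a b) ∧
      x = ∫ s in (0:ℝ)..T, u s • f s} = Φ '' K := by
    ext x
    constructor
    · rintro ⟨u, hu, hub, rfl⟩
      have hu2 : MemLp u 2 μ := by
        refine MemLp.of_bound hu.aestronglyMeasurable C (ae_of_all _ fun s => ?_)
        rw [Real.norm_eq_abs]; exact huC u hub s
      set U : Lp ℝ 2 μ := hu2.toLp u with hU
      set ℓ : WeakDual ℝ (Lp ℝ 2 μ) :=
        StrongDual.toWeakDual (InnerProductSpace.toDual ℝ (Lp ℝ 2 μ) U) with hℓdef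
      have hℓapp : ∀ g : Lp ℝ 2 μ, ℓ g = ∫ x, u x * g x ∂μ := by
        intro g
        have h1 : ℓ g = ∫ x, U x * g x ∂μ := hrep U g
        rw [h1]
        refine integral_congr_ae ?_
        filter_upwards [hu2.coeFn_toLp] with x hx
        rw [hx]
      refine ⟨ℓ, ⟨?_, ?_⟩, ?_⟩
      · have : ‖WeakDual.toStrongDual ℓ‖ = ‖U‖ := by
          rw [hℓdef]
          exact (InnerProductSpace.toDual ℝ (Lp ℝ 2 μ)).norm_map U
        rw [this, hR]
        refine Lp.norm_le_of_ae_bound hC0 ?_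
        filter_upwards [hu2.coeFn_toLp] with x hx
        rw [hx, Real.norm_eq_abs]; exact huC u hub x
      · intro g hg
        have hgint : Integrable (g : ℝ → ℝ) μ := (Lp.memLp g).integrable one_le_two
        have hugint : Integrable (fun x => u x * g x) μ := by
          refine (hinner_int U g).congr ?_
          filter_upwards [hu2.coeFn_toLp] with x hx
          rw [hx]
        rw [hℓapp g]
        constructor
        · rw [← MeasureTheory.integral_const_mul]
          refine integral_mono_ae (hgint.const_mul a) hugint ?_
          filter_upwards [hg] with x hx
          exact mul_le_mul_of_nonneg_right (hub x).1 hx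
        · rw [← MeasureTheory.integral_const_mul]
          refine integral_mono_ae hugint (hgint.const_mul b) ?_
          filter_upwards [hg] with x hx
          exact mul_le_mul_of_nonneg_right (hub x).2 hx
      · funext i
        rw [hΦdef]
        simp only
        rw [hℓapp (F i), key_coord u hu hub i]
        refine integral_congr_ae ?_
        filter_upwards [(hfi i).coeFn_toLp] with x hx
        rw [hx]
    · rintro ⟨ℓ, hℓ, rfl⟩
      set U : Lp ℝ 2 μ := (InnerProductSpace.toDual ℝ (Lp ℝ 2 μ)).symm
        (WeakDual.toStrongDual ℓ) with hU
      have hℓapp : ∀ g : Lp ℝ 2 μ, ℓ g = ∫ x, U x * g x ∂μ := by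
        intro g
        have h1 : (InnerProductSpace.toDual ℝ (Lp ℝ 2 μ)) U = WeakDual.toStrongDual ℓ := by
          rw [hU]; exact (InnerProductSpace.toDual ℝ (Lp ℝ 2 μ)).apply_symm_apply _
        have h2 : ℓ g = ((InnerProductSpace.toDual ℝ (Lp ℝ 2 μ)) U) g := by rw [h1]; rfl
        rw [h2, hrep]
      have hUint : Integrable (U : ℝ → ℝ) μ := (Lp.memLp U).integrable one_le_two
      have hUm : Measurable (U : ℝ → ℝ) := (Lp.stronglyMeasurable U).measurable
      -- the two a.e. bounds on U
      have hbnd : ∀ s : Set ℝ, MeasurableSet s → μ s < ⊤ →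
          a * (μ s).toReal ≤ ∫ x in s, U x ∂μ ∧ (∫ x in s, U x ∂μ) ≤ b * (μ s).toReal := by
        intro s hs hμs
        set g : Lp ℝ 2 μ := indicatorConstLp 2 hs hμs.ne (1:ℝ) with hg
        have hgae : (g : ℝ → ℝ) =ᵐ[μ] s.indicator fun _ => (1:ℝ) := indicatorConstLp_coeFn
        have hgpos : 0 ≤ᵐ[μ] (g : ℝ → ℝ) := by
          filter_upwards [hgae] with x hx
          rw [hx]
          exact Set.indicator_nonneg (fun _ _ => zero_le_one) x
        have hgint : ∫ x, g x ∂μ = (μ s).toReal := by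
          rw [integral_congr_ae hgae, integral_indicator_const (1:ℝ) hs, smul_eq_mul, mul_one, measureReal_def]
        have hℓg : ℓ g = ∫ x in s, U x ∂μ := by
          rw [hℓapp g, ← MeasureTheory.integral_indicator hs]
          refine integral_congr_ae ?_
          filter_upwards [hgae] with x hx
          rw [hx]
          by_cases hxs : x ∈ s <;> simp [Set.indicator, hxs]
        have := hℓ.2 g hgpos
        rw [hℓg, hgint] at this
        exact this
      have haU : ∀ᵐ x ∂μ, a ≤ U x := by
        have h0 : 0 ≤ᵐ[μ] fun x => U x - a := by
          refine ae_nonneg_of_forall_setIntegral_nonneg (hUint.sub (integrable_const a)) ?_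
          intro s hs hμs
          rw [integral_sub (hUint.restrict) (integrable_const a), setIntegral_const,
            smul_eq_mul, sub_nonneg, mul_comm]
          exact (hbnd s hs hμs).1
        filter_upwards [h0] with x hx
        simp only [Pi.zero_apply] at hx
        linarith
      have hbU : ∀ᵐ x ∂μ, U x ≤ b := by
        have h0 : 0 ≤ᵐ[μ] fun x => b - U x := by
          refine ae_nonneg_of_forall_setIntegral_nonneg ((integrable_const b).sub hUint) ?_
          intro s hs hμs
          rw [integral_sub (integrable_const b) (hUint.restrict), setIntegral_const,
            smul_eq_mul, sub_nonneg, mul_comm]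
          exact (hbnd s hs hμs).2
        filter_upwards [h0] with x hx
        simp only [Pi.zero_apply] at hx
        linarith
      set u : ℝ → ℝ := fun s => min b (max a (U s)) with hu
      have hum : Measurable u := measurable_const.min (measurable_const.max hUm)
      have hub : ∀ s, u s ∈ Set.Icc a b :=
        fun s => ⟨le_min hab (le_max_left a _), min_le_left _ _⟩
      have huU : u =ᵐ[μ] (U : ℝ → ℝ) := by
        filter_upwards [haU, hbU] with x h1 h2
        rw [hu]
        simp only
        rw [max_eq_right h1, min_eq_right h2]
      refine ⟨u, hum, hub, ?_⟩
      funext i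
      rw [key_coord u hum hub i, hΦdef]
      simp only
      rw [hℓapp (F i)]
      refine integral_congr_ae ?_
      filter_upwards [huU, (hfi i).coeFn_toLp] with x h1 h2
      rw [h1, h2]
  rw [hset]
  exact hKcompact.image hΦ

/-- The accessible set from `X₀` in time `T` for `Ẋ = AX + Bu`, `X(0) = X₀`,
with measurable controls taking values in the set `I`. -/
def accSetI (n : ℕ) (A : Matrix (Fin n) (Fin n) ℝ) (B X₀ : Fin n → ℝ)
    (I : Set ℝ) (T : ℝ) : Set (Fin n → ℝ) :=
  {x | ∃ u : ℝ → ℝ, Measurable u ∧ (∀ s, u s ∈ I) ∧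
    x = (NormedSpace.exp (T • A)).mulVec X₀ +
      ∫ s in (0:ℝ)..T, u s • (NormedSpace.exp ((T - s) • A)).mulVec B}

/-- For `T > 0` and a compact control interval `I`, the accessible set
`A(X₀, T)` is compact. -/
theorem stmt5 (n : ℕ) (A : Matrix (Fin n) (Fin n) ℝ) (B X₀ : Fin n → ℝ)
    (I : Set ℝ) (hIc : IsCompact I) (hIconv : Convex ℝ I)
    (T : ℝ) (hT : 0 < T) :
    IsCompact ((accSetI n A B X₀ I T) : Set (Fin n → ℝ)) := by
  rcases I.eq_empty_or_nonempty with hI | hI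
  · have : accSetI n A B X₀ I T = ∅ := by
      ext x
      simp only [accSetI, Set.mem_setOf_eq, Set.mem_empty_iff_false, iff_false]
      rintro ⟨u, _, hu, _⟩
      exact absurd (hu 0) (by rw [hI]; exact Set.notMem_empty _)
    rw [this]
    exact isCompact_empty
  · -- I = Icc a b
    set a := sInf I with ha
    set b := sSup I with hb
    have haI : a ∈ I := hIc.sInf_mem hI
    have hbI : b ∈ I := hIc.sSup_mem hI
    have hab : a ≤ b := csInf_le_csSup hI hIc.isBounded.bddBelow hIc.isBounded.bddAbove
    have hIcc : I = Set.Icc a b := by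
      apply le_antisymm
      · intro x hx
        exact ⟨csInf_le hIc.isBounded.bddBelow hx, le_csSup hIc.isBounded.bddAbove hx⟩
      · intro x hx
        exact hIconv.ordConnected.out haI hbI hx
    -- continuity of f
    have hfc : Continuous fun s : ℝ => (NormedSpace.exp ((T - s) • A)).mulVec B := by
      have h1 : Continuous fun s : ℝ => NormedSpace.exp ((T - s) • A) := by
        letI : SeminormedRing (Matrix (Fin n) (Fin n) ℝ) := Matrix.linftyOpSemiNormedRing
        letI : NormedRing (Matrix (Fin n) (Fin n) ℝ) := Matrix.linftyOpNormedRing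
        letI : NormedAlgebra ℝ (Matrix (Fin n) (Fin n) ℝ) := Matrix.linftyOpNormedAlgebra
        letI : NormedAlgebra ℚ (Matrix (Fin n) (Fin n) ℝ) := NormedAlgebra.restrictScalars ℚ ℝ _
        exact NormedSpace.exp_continuous.comp
          ((continuous_const.sub continuous_id).smul continuous_const)
      exact h1.matrix_mulVec continuous_const
    have hcmp := compact_reach n (fun s => (NormedSpace.exp ((T - s) • A)).mulVec B)
      hfc a b hab T hT
    have heq : accSetI n A B X₀ I T =
        (fun y => (NormedSpace.exp (T • A)).mulVec X₀ + y) ''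
          {x : Fin n → ℝ | ∃ u : ℝ → ℝ, Measurable u ∧ (∀ s, u s ∈ Set.Icc a b) ∧
            x = ∫ s in (0:ℝ)..T, u s • (NormedSpace.exp ((T - s) • A)).mulVec B} := by
      ext x
      constructor
      · rintro ⟨u, hu, hub, rfl⟩
        exact ⟨_, ⟨u, hu, fun s => hIcc ▸ hub s, rfl⟩, rfl⟩
      · rintro ⟨y, ⟨u, hu, hub, rfl⟩, rfl⟩
        exact ⟨u, hu, fun s => hIcc.symm ▸ hub s, rfl⟩
    rw [heq]
    exact hcmp.image (continuous_const.add continuous_id)
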